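/- Let A be a finite set and H a nonnegative, strongly subadditive real-valued function on subsets of A with H(∅) = 0. Suppose A is partitioned into pairwise disjoint nonempty subsets B_1, …, B_k with A = B_1 ∪ … ∪ B_k and H(A) = H(B_1) + … + H(B_k). For nonempty S ⊆ A let I_A(S) = −∑_{T ⊆ S} (−1)^{|T|} H(T ∪ (A∖S)), and for nonempty S ⊆ B_i let I_{B_i}(S) = −∑_{T ⊆ S} (−1)^{|T|} H(T ∪ (B_i∖S)). Then for every nonempty S ⊆ A: if S ⊆ B_i for some i then I_A(S) = I_{B_i}(S), and if S intersects at least two of the blocks B_i then I_A(S) = 0. -/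

import Mathlib

open Finset

/-- The shared information of the irreducible dependency (relative to the system on the
component set `X`) that includes the components in `S` and excludes those in `X \ S`:
`I_X(S) = −∑_{T ⊆ S} (−1)^{|T|} H(T ∪ (X∖S))`. -/
noncomputable def sharedInfo {α : Type*} [DecidableEq α]
    (X : Finset α) (H : Finset α → ℝ) (S : Finset α) : ℝ :=
  -∑ T ∈ S.powerset, (-1 : ℝ) ^ T.card * H (T ∪ (X \ S))

section Aux

variable {α : Type*} [DecidableEq α]

lemma aux_sum_powerset_neg_one (x : Finset α) :
    (∑ m ∈ x.powerset, (-1 : ℝ) ^ m.card) = if x = ∅ then 1 else 0 := by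
  have h := Finset.sum_powerset_neg_one_pow_card (x := x)
  have h2 : (∑ m ∈ x.powerset, (-1 : ℝ) ^ m.card)
      = ((∑ m ∈ x.powerset, (-1 : ℤ) ^ m.card : ℤ) : ℝ) := by push_cast; rfl
  rw [h2, h]; split_ifs <;> simp

lemma aux_union_inter_left {a b P Q : Finset α} (ha : a ⊆ P) (hb : b ⊆ Q)
    (hPQ : Disjoint P Q) : (a ∪ b) ∩ P = a := by
  ext y
  simp only [mem_inter, mem_union]
  constructor
  · rintro ⟨h | h, hy⟩
    · exact h
    · exact absurd hy (Finset.disjoint_right.1 hPQ (hb h))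
  · exact fun h => ⟨Or.inl h, ha h⟩

lemma aux_sum_powerset_union (P Q : Finset α) (hPQ : Disjoint P Q) (F : Finset α → ℝ) :
    ∑ T ∈ (P ∪ Q).powerset, F T = ∑ a ∈ P.powerset, ∑ b ∈ Q.powerset, F (a ∪ b) := by
  rw [← Finset.sum_product']
  refine Finset.sum_nbij' (fun T ↦ (T ∩ P, T ∩ Q)) (fun p ↦ p.1 ∪ p.2) ?_ ?_ ?_ ?_ ?_
  · intro T hT
    simp only [mem_powerset] at hT
    simp [Finset.mem_product, inter_subset_right]
  · intro p hp
    simp only [Finset.mem_product, mem_powerset] at hp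
    exact mem_powerset.2 (union_subset_union hp.1 hp.2)
  · intro T hT
    simp only [mem_powerset] at hT
    simp only [← Finset.inter_union_distrib_left]
    exact Finset.inter_eq_left.2 hT
  · intro p hp
    simp only [Finset.mem_product, mem_powerset] at hp
    have h1 : (p.1 ∪ p.2) ∩ P = p.1 := aux_union_inter_left hp.1 hp.2 hPQ
    have h2 : (p.1 ∪ p.2) ∩ Q = p.2 := by
      rw [union_comm]; exact aux_union_inter_left hp.2 hp.1 hPQ.symm
    simp only [h1, h2]
  · intro T hT
    simp only [mem_powerset] at hT
    congr 1
    rw [← Finset.inter_union_distrib_left]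
    exact (Finset.inter_eq_left.2 hT).symm

lemma aux_signed_factor {P Q : Finset α} (hPQ : Disjoint P Q) (f : Finset α → ℝ) :
    ∑ T ∈ (P ∪ Q).powerset, (-1 : ℝ) ^ T.card * f (T ∩ P)
      = (∑ b ∈ Q.powerset, (-1 : ℝ) ^ b.card)
        * ∑ a ∈ P.powerset, (-1 : ℝ) ^ a.card * f a := by
  rw [aux_sum_powerset_union P Q hPQ]
  have hterm : ∀ a ∈ P.powerset, ∀ b ∈ Q.powerset,
      (-1 : ℝ) ^ (a ∪ b).card * f ((a ∪ b) ∩ P)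
        = (-1 : ℝ) ^ b.card * ((-1 : ℝ) ^ a.card * f a) := by
    intro a ha b hb
    rw [mem_powerset] at ha hb
    have hd : Disjoint a b := hPQ.mono ha hb
    rw [Finset.card_union_of_disjoint hd, aux_union_inter_left ha hb hPQ, pow_add]
    ring
  calc ∑ a ∈ P.powerset, ∑ b ∈ Q.powerset, (-1 : ℝ) ^ (a ∪ b).card * f ((a ∪ b) ∩ P)
      = ∑ a ∈ P.powerset, ∑ b ∈ Q.powerset, (-1 : ℝ) ^ b.card * ((-1 : ℝ) ^ a.card * f a) :=
        Finset.sum_congr rfl fun a ha => Finset.sum_congr rfl fun b hb => hterm a ha b hb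
    _ = ∑ a ∈ P.powerset, (∑ b ∈ Q.powerset, (-1 : ℝ) ^ b.card) * ((-1 : ℝ) ^ a.card * f a) :=
        Finset.sum_congr rfl fun a _ => (Finset.sum_mul _ _ _).symm
    _ = _ := (Finset.mul_sum _ _ _).symm

lemma aux_two_block {A : Finset α} (H : Finset α → ℝ) (hH0 : H ∅ = 0)
    (hssa : ∀ U ⊆ A, ∀ V ⊆ A, H (U ∪ V) ≤ H U + H V - H (U ∩ V))
    {Bs Cs U V : Finset α} (hBA : Bs ⊆ A) (hCA : Cs ⊆ A) (hd : Disjoint Bs Cs)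
    (hsum : H (Bs ∪ Cs) = H Bs + H Cs) (hU : U ⊆ Bs) (hV : V ⊆ Cs) :
    H (U ∪ V) = H U + H V := by
  have hUA : U ⊆ A := hU.trans hBA
  have hVA : V ⊆ A := hV.trans hCA
  have h1 := hssa (U ∪ Cs) (union_subset hUA hCA) Bs hBA
  have h2 := hssa (U ∪ V) (union_subset hUA hVA) Cs hCA
  have h3 := hssa U hUA V hVA
  have e1 : (U ∪ Cs) ∪ Bs = Bs ∪ Cs := by
    rw [union_right_comm, Finset.union_eq_right.2 hU]
  have e2 : (U ∪ Cs) ∩ Bs = U := aux_union_inter_left hU (subset_refl Cs) hd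
  have e3 : (U ∪ V) ∪ Cs = U ∪ Cs := by
    rw [union_assoc, Finset.union_eq_right.2 hV]
  have e4 : (U ∪ V) ∩ Cs = V := by
    rw [union_comm]; exact aux_union_inter_left hV hU hd.symm
  have e5 : U ∩ V = ∅ := by
    rw [← Finset.disjoint_iff_inter_eq_empty]; exact hd.mono hU hV
  rw [e1, e2] at h1
  rw [e3, e4] at h2
  rw [e5, hH0] at h3
  linarith

end Aux

/-- If `A` decomposes into independent subsystems `B_1, …, B_k`, then an irreducible
dependency of `A` has nonzero information only if it includes components from a single
block, in which case its information equals the corresponding information in that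
block's subsystem. -/
theorem sharedInfo_of_independent_partition {α : Type*} [DecidableEq α]
    (A : Finset α) (H : Finset α → ℝ) (k : ℕ) (B : Fin k → Finset α)
    (hpos : ∀ U ⊆ A, 0 ≤ H U) (hH0 : H ∅ = 0)
    (hssa : ∀ U ⊆ A, ∀ V ⊆ A, H (U ∪ V) ≤ H U + H V - H (U ∩ V))
    (hne : ∀ i, (B i).Nonempty)
    (hdisj : ∀ i j, i ≠ j → Disjoint (B i) (B j))
    (hcover : Finset.univ.biUnion B = A)
    (hind : H A = ∑ i, H (B i)) :
    ∀ S ⊆ A, S ≠ ∅ →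
      (∀ i, S ⊆ B i → sharedInfo A H S = sharedInfo (B i) H S) ∧
      ((∃ i j, i ≠ j ∧ (S ∩ B i).Nonempty ∧ (S ∩ B j).Nonempty) →
        sharedInfo A H S = 0) := by
  have hBsub : ∀ i, B i ⊆ A := fun i => hcover ▸ subset_biUnion_of_mem B (mem_univ i)
  have hUsub : ∀ s : Finset (Fin k), s.biUnion B ⊆ A := fun s => by
    rw [← hcover]; exact biUnion_subset_biUnion_of_subset_left B (subset_univ s)
  -- subadditivity over block unions
  have subadd : ∀ s : Finset (Fin k), H (s.biUnion B) ≤ ∑ i ∈ s, H (B i) := by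
    intro s
    induction s using Finset.induction_on with
    | empty => simp [hH0]
    | insert _ _ ha ih =>
      rename_i a s
      rw [Finset.biUnion_insert, Finset.sum_insert ha]
      have h := hssa (B a) (hBsub a) (s.biUnion B) (hUsub s)
      have hp := hpos (B a ∩ s.biUnion B)
        ((inter_subset_left).trans (hBsub a))
      linarith
  -- exact additivity over block unions
  have exactA : ∀ s : Finset (Fin k), H (s.biUnion B) = ∑ i ∈ s, H (B i) := by
    intro s
    have hsplit : s.biUnion B ∪ sᶜ.biUnion B = A := by
      rw [← hcover]
      ext x
      simp only [mem_union, mem_biUnion, mem_compl, mem_univ, true_and]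
      constructor
      · rintro (⟨i, _, h⟩ | ⟨i, _, h⟩) <;> exact ⟨i, h⟩
      · rintro ⟨i, h⟩
        by_cases hi : i ∈ s
        · exact Or.inl ⟨i, hi, h⟩
        · exact Or.inr ⟨i, hi, h⟩
    have h := hssa (s.biUnion B) (hUsub s) (sᶜ.biUnion B) (hUsub sᶜ)
    rw [hsplit] at h
    have hp := hpos (s.biUnion B ∩ sᶜ.biUnion B)
      ((inter_subset_left).trans (hUsub s))
    have h1 := subadd s
    have h2 := subadd sᶜ
    have hsum : (∑ i ∈ s, H (B i)) + ∑ i ∈ sᶜ, H (B i) = H A := by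
      rw [hind]; exact Finset.sum_add_sum_compl s _
    linarith
  -- blockwise decomposition of H
  have blockwise : ∀ s : Finset (Fin k), ∀ X ⊆ A,
      H (X ∩ s.biUnion B) = ∑ i ∈ s, H (X ∩ B i) := by
    intro s
    induction s using Finset.induction_on with
    | empty => intro X _; simp [hH0]
    | insert _ _ ha ih =>
      rename_i a s
      intro X hX
      rw [Finset.biUnion_insert, Finset.sum_insert ha, Finset.inter_union_distrib_left]
      have hdis : Disjoint (B a) (s.biUnion B) := by
        rw [Finset.disjoint_biUnion_right]
        exact fun i hi => hdisj a i (fun h => ha (h ▸ hi))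
      have hsum2 : H (B a ∪ s.biUnion B) = H (B a) + H (s.biUnion B) := by
        have := exactA (insert a s)
        rw [Finset.biUnion_insert, Finset.sum_insert ha, ← exactA s] at this
        exact this
      rw [aux_two_block H hH0 hssa (hBsub a) (hUsub s) hdis hsum2
        inter_subset_right inter_subset_right, ih X hX]
  have decomp : ∀ X ⊆ A, H X = ∑ i, H (X ∩ B i) := by
    intro X hX
    have := blockwise Finset.univ X hX
    rwa [hcover, Finset.inter_eq_left.2 hX] at this
  intro S hS hSne
  -- expansion of each H term blockwise
  have hexp : ∀ T ∈ S.powerset, H (T ∪ (A \ S)) = ∑ i, H ((T ∩ B i) ∪ (B i \ S)) := by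
    intro T hT
    rw [mem_powerset] at hT
    have hTA : T ∪ (A \ S) ⊆ A := union_subset (hT.trans hS) (sdiff_subset)
    rw [decomp _ hTA]
    refine Finset.sum_congr rfl fun i _ => ?_
    congr 1
    ext x
    simp only [mem_inter, mem_union, mem_sdiff]
    constructor
    · rintro ⟨h | ⟨hA, hnS⟩, hB⟩
      · exact Or.inl ⟨h, hB⟩
      · exact Or.inr ⟨hB, hnS⟩
    · rintro (⟨h1, h2⟩ | ⟨h1, h2⟩)
      · exact ⟨Or.inl h1, h2⟩
      · exact ⟨Or.inr ⟨hBsub i h1, h2⟩, h1⟩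
  have hshared : sharedInfo A H S
      = -∑ i, ∑ T ∈ S.powerset, (-1 : ℝ) ^ T.card * H ((T ∩ B i) ∪ (B i \ S)) := by
    unfold sharedInfo
    rw [Finset.sum_comm]
    congr 1
    refine Finset.sum_congr rfl fun T hT => ?_
    rw [hexp T hT, Finset.mul_sum]
  -- the per-block inner sum
  have main : ∀ i, (∑ T ∈ S.powerset, (-1 : ℝ) ^ T.card * H ((T ∩ B i) ∪ (B i \ S)))
      = (if S \ B i = ∅ then (1 : ℝ) else 0)
        * ∑ a ∈ (S ∩ B i).powerset, (-1 : ℝ) ^ a.card * H (a ∪ (B i \ S)) := by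
    intro i
    have hPQ : Disjoint (S ∩ B i) (S \ B i) := by
      rw [Finset.disjoint_left]
      intro x hx hx2
      exact (mem_sdiff.1 hx2).2 (mem_inter.1 hx).2
    have hS' : (S ∩ B i) ∪ (S \ B i) = S := by
      ext x; simp only [mem_union, mem_inter, mem_sdiff]; tauto
    have step1 : (∑ T ∈ S.powerset, (-1 : ℝ) ^ T.card * H ((T ∩ B i) ∪ (B i \ S)))
        = ∑ T ∈ ((S ∩ B i) ∪ (S \ B i)).powerset,
            (-1 : ℝ) ^ T.card * H ((T ∩ (S ∩ B i)) ∪ (B i \ S)) := by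
      rw [hS']
      refine Finset.sum_congr rfl fun T hT => ?_
      rw [mem_powerset] at hT
      have : T ∩ (S ∩ B i) = T ∩ B i := by
        rw [← Finset.inter_assoc, Finset.inter_eq_left.2 hT]
      rw [this]
    rw [step1, aux_signed_factor hPQ (fun a => H (a ∪ (B i \ S))),
      aux_sum_powerset_neg_one]
  constructor
  · -- contained in a single block
    intro i hSi
    have hzero : ∀ j ∈ (Finset.univ : Finset (Fin k)), j ≠ i →
        (∑ T ∈ S.powerset, (-1 : ℝ) ^ T.card * H ((T ∩ B j) ∪ (B j \ S))) = 0 := by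
      intro j _ hj
      rw [main j]
      have hQ : S \ B j ≠ ∅ := by
        intro h
        have hsub : S ⊆ B j := Finset.sdiff_eq_empty_iff_subset.1 h
        refine hSne (Finset.eq_empty_of_forall_notMem fun x hx => ?_)
        exact Finset.disjoint_left.1 (hdisj i j fun h' => hj h'.symm) (hSi hx) (hsub hx)
      rw [if_neg hQ, zero_mul]
    rw [hshared, Finset.sum_eq_single_of_mem i (mem_univ i) hzero, main i,
      Finset.sdiff_eq_empty_iff_subset.2 hSi, if_pos rfl, one_mul,
      Finset.inter_eq_left.2 hSi]
    rfl
  · -- meets two blocks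
    rintro ⟨i, j, hij, hi, hj⟩
    rw [hshared]
    have hzero : ∀ l, (∑ T ∈ S.powerset, (-1 : ℝ) ^ T.card * H ((T ∩ B l) ∪ (B l \ S))) = 0 := by
      intro l
      rw [main l]
      have hQ : S \ B l ≠ ∅ := by
        intro h
        have hsub : S ⊆ B l := Finset.sdiff_eq_empty_iff_subset.1 h
        by_cases hil : i = l
        · subst hil
          obtain ⟨x, hx⟩ := hj
          rw [mem_inter] at hx
          exact (Finset.disjoint_left.1 (hdisj i j hij) (hsub hx.1)) hx.2
        · obtain ⟨x, hx⟩ := hi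
          rw [mem_inter] at hx
          exact (Finset.disjoint_left.1 (hdisj l i (fun h' => hil h'.symm)) (hsub hx.1)) hx.2
      rw [if_neg hQ, zero_mul]
    simp [hzero]
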